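/- For integers ℓ, m with 2m - ℓ < -1 and a complex number z with nonzero imaginary part, the integral I(ℓ,m) = ∫_{-∞}^{∞} (x+z)^{m-ℓ} (x+z̄)^{m} dx satisfies the recursion I(ℓ,m) = (m/(ℓ-m-1)) · I(ℓ-2, m-1) whenever m ≥ 1. -/

import Mathlib

open MeasureTheory Filter Topology


private lemma zpow_anti_base {a b : ℝ} (ha : 0 < a) (hab : a ≤ b) {n : ℤ} (hn : n ≤ 0) :
    b ^ n ≤ a ^ n := by
  have hb : 0 < b := ha.trans_le hab
  obtain ⟨k, hk⟩ := Int.eq_ofNat_of_zero_le (neg_nonneg.2 hn)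
  have hnk : n = -(k : ℤ) := by omega
  rw [hnk, zpow_neg, zpow_neg, zpow_natCast, zpow_natCast]
  gcongr

private lemma ne_zero_aux (z : ℂ) (hz : z.im ≠ 0) (x : ℝ) : (x : ℂ) + z ≠ 0 := by
  intro h
  exact hz (by simpa using congrArg Complex.im h)

private lemma norm_aux (z : ℂ) (hz : z.im ≠ 0) (a b : ℤ) (x : ℝ) :
    ‖((x : ℂ) + z) ^ a * ((x : ℂ) + (starRingEnd ℂ) z) ^ b‖
      = ‖(x : ℂ) + z‖ ^ (a + b) := by
  have h1 : (x : ℂ) + (starRingEnd ℂ) z = (starRingEnd ℂ) ((x : ℂ) + z) := by simp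
  have h2 : ‖(x : ℂ) + z‖ ≠ 0 :=
    norm_ne_zero_iff.mpr (ne_zero_aux z hz x)
  rw [norm_mul, norm_zpow, norm_zpow, h1,
    Complex.norm_conj, ← zpow_add₀ h2]

private lemma lower_bound (z : ℂ) (hz : z.im ≠ 0) :
    ∃ c > 0, ∀ x : ℝ, c * (1 + |x|) ≤ ‖(x : ℂ) + z‖ := by
  have hd : 0 < |z.im| := abs_pos.2 hz
  set d := |z.im| with hdd
  refine ⟨(1 + (1 + ‖z‖) / d)⁻¹, by positivity, fun x => ?_⟩
  have habs : d ≤ ‖(x : ℂ) + z‖ := by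
    have := Complex.abs_im_le_norm ((x : ℂ) + z)
    simpa using this
  rw [inv_mul_le_iff₀ (by positivity)]
  have h1 : |x| ≤ ‖(x : ℂ) + z‖ + ‖z‖ := by
    calc |x| = ‖(x : ℂ) + z - z‖ := by simp
    _ ≤ ‖(x : ℂ) + z‖ + ‖z‖ := by
        simpa [sub_eq_add_neg] using (norm_add_le ((x : ℂ) + z) (-z))
  have h2 : (1 + ‖z‖) ≤ (1 + ‖z‖) / d * ‖(x : ℂ) + z‖ := by
    rw [div_mul_eq_mul_div, le_div_iff₀ hd]
    have : 0 ≤ 1 + ‖z‖ := by positivity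
    nlinarith [habs]
  nlinarith [h1, h2, norm_nonneg ((x : ℂ) + z)]

private lemma integrable_aux (z : ℂ) (hz : z.im ≠ 0) (a b : ℤ) (hab : a + b ≤ -2) :
    Integrable (fun x : ℝ => ((x : ℂ) + z) ^ a * ((x : ℂ) + (starRingEnd ℂ) z) ^ b) := by
  obtain ⟨c, hc, hle⟩ := lower_bound z hz
  have hd : 0 < |z.im| := abs_pos.2 hz
  have hconj : ((starRingEnd ℂ) z).im ≠ 0 := by simpa using hz
  have hmeas : AEStronglyMeasurable
      (fun x : ℝ => ((x : ℂ) + z) ^ a * ((x : ℂ) + (starRingEnd ℂ) z) ^ b) volume := by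
    apply Continuous.aestronglyMeasurable
    apply Continuous.mul
    · exact (Continuous.add Complex.continuous_ofReal continuous_const).zpow₀ a
        (fun x => Or.inl (ne_zero_aux z hz x))
    · exact (Continuous.add Complex.continuous_ofReal continuous_const).zpow₀ b
        (fun x => Or.inl (ne_zero_aux ((starRingEnd ℂ) z) hconj x))
  have hint : Integrable (fun x : ℝ =>
      |z.im| ^ (a + b + 2) * (c⁻¹ ^ 2 * (1 + ‖x‖) ^ (-(2 : ℝ)))) := by
    exact ((integrable_one_add_norm (by norm_num : (Module.finrank ℝ ℝ : ℝ) < 2)).const_mul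
      _).const_mul _
  refine hint.mono' hmeas (Filter.Eventually.of_forall fun x => ?_)
  rw [norm_aux z hz a b x]
  set A := ‖(x : ℂ) + z‖ with hA
  have hA0 : 0 < A := ((mul_pos hc (by positivity)).trans_le (hle x))
  have habs : |z.im| ≤ A := by
    have := Complex.abs_im_le_norm ((x : ℂ) + z)
    simpa using this
  have e1 : A ^ (a + b) = A ^ (a + b + 2) * A ^ (-2 : ℤ) := by
    rw [← zpow_add₀ hA0.ne']; ring_nf
  rw [e1]
  have h2 : A ^ (a + b + 2) ≤ |z.im| ^ (a + b + 2) :=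
    zpow_anti_base hd habs (by omega)
  have h3 : A ^ (-2 : ℤ) ≤ c⁻¹ ^ 2 * (1 + ‖x‖) ^ (-(2 : ℝ)) := by
    have hx1 : (0:ℝ) < 1 + |x| := by positivity
    have := zpow_anti_base (mul_pos hc hx1) (hle x) (n := -2) (by omega)
    calc A ^ (-2 : ℤ) ≤ (c * (1 + |x|)) ^ (-2 : ℤ) := this
      _ = c⁻¹ ^ 2 * (1 + ‖x‖) ^ (-(2 : ℝ)) := by
          rw [show (-(2:ℝ)) = ((-2 : ℤ) : ℝ) by norm_num,
            Real.rpow_intCast, mul_zpow]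
          simp only [Real.norm_eq_abs, zpow_neg, zpow_two]
          rw [mul_inv]
          ring
  calc A ^ (a + b + 2) * A ^ (-2 : ℤ)
      ≤ |z.im| ^ (a + b + 2) * (c⁻¹ ^ 2 * (1 + ‖x‖) ^ (-(2 : ℝ))) := by
        apply mul_le_mul h2 h3 (zpow_nonneg hA0.le _) (zpow_nonneg (abs_nonneg _) _)
    _ = _ := rfl

private lemma deriv_aux (z : ℂ) (hz : z.im ≠ 0) (a : ℤ) (x : ℝ) :
    HasDerivAt (fun y : ℝ => ((y : ℂ) + z) ^ a) ((a : ℂ) * ((x : ℂ) + z) ^ (a - 1)) x := by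
  have h1 : HasDerivAt (fun y : ℂ => y + z) 1 (x : ℂ) := (hasDerivAt_id _).add_const z
  have := ((hasDerivAt_zpow a ((x : ℂ) + z) (Or.inl (ne_zero_aux z hz x))).comp
    (x : ℂ) h1).comp_ofReal
  simpa using this


/-- Integration-by-parts recursion for the integral
`I(ℓ,m) = ∫_{-∞}^{∞} (x+z)^{m-ℓ} (x+z̄)^{m} dx`: for integers `ℓ, m` with `2m - ℓ < -1`,
`m ≥ 1`, and `z` non-real, `I(ℓ,m) = (m/(ℓ-m-1)) · I(ℓ-2, m-1)`. -/
theorem integral_recursion (ℓ m : ℤ) (hm : 1 ≤ m) (hconv : 2 * m - ℓ < -1)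
    (z : ℂ) (hz : z.im ≠ 0) :
    (∫ x : ℝ, ((x : ℂ) + z) ^ (m - ℓ) * ((x : ℂ) + (starRingEnd ℂ) z) ^ m)
      = ((m : ℂ) / ((ℓ : ℂ) - (m : ℂ) - 1)) *
        ∫ x : ℝ, ((x : ℂ) + z) ^ ((m - 1) - (ℓ - 2)) * ((x : ℂ) + (starRingEnd ℂ) z) ^ (m - 1) := by
  have hconj : ((starRingEnd ℂ) z).im ≠ 0 := by simpa using hz
  set p : ℤ := m - ℓ + 1 with hp
  have hpe : (m - 1) - (ℓ - 2) = p := by omega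
  set g1 : ℝ → ℂ := fun x => ((x : ℂ) + z) ^ (m - ℓ) * ((x : ℂ) + (starRingEnd ℂ) z) ^ m with hg1
  set g2 : ℝ → ℂ := fun x => ((x : ℂ) + z) ^ p * ((x : ℂ) + (starRingEnd ℂ) z) ^ (m - 1) with hg2
  set F : ℝ → ℂ := fun x => ((x : ℂ) + z) ^ p * ((x : ℂ) + (starRingEnd ℂ) z) ^ m with hF
  set F' : ℝ → ℂ := fun x => (p : ℂ) * g1 x + (m : ℂ) * g2 x with hF'
  have hint1 : Integrable g1 := integrable_aux z hz _ _ (by omega)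
  have hint2 : Integrable g2 := integrable_aux z hz _ _ (by omega)
  have hderiv : ∀ x : ℝ, HasDerivAt F (F' x) x := by
    intro x
    have h1 := deriv_aux z hz p x
    have h2 := deriv_aux ((starRingEnd ℂ) z) hconj m x
    have := h1.mul h2
    refine this.congr_deriv ?_
    simp only [hF', hg1, hg2, hF]
    have : p - 1 = m - ℓ := by omega
    rw [this]
    ring
  have hF'int : Integrable F' := (hint1.const_mul _).add (hint2.const_mul _)
  -- tendsto of F at ±∞
  have hnormF : ∀ x : ℝ, ‖F x‖ = ‖(x : ℂ) + z‖ ^ (p + m) :=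
    fun x => norm_aux z hz p m x
  have habs_top : Tendsto (fun x : ℝ => ‖(x : ℂ) + z‖) atTop atTop := by
    apply tendsto_atTop_mono (fun x => ?_)
      (tendsto_abs_atTop_atTop.comp (tendsto_atTop_add_const_right atTop z.re tendsto_id))
    have := Complex.abs_re_le_norm ((x : ℂ) + z)
    simpa using this
  have habs_bot : Tendsto (fun x : ℝ => ‖(x : ℂ) + z‖) atBot atTop := by
    apply tendsto_atTop_mono (fun x => ?_)
      (tendsto_abs_atBot_atTop.comp (tendsto_atBot_add_const_right atBot z.re tendsto_id))
    have := Complex.abs_re_le_norm ((x : ℂ) + z)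
    simpa using this
  have hz0 : Tendsto (fun t : ℝ => t ^ (p + m)) atTop (𝓝 0) :=
    tendsto_zpow_atTop_zero (by omega)
  have htop : Tendsto F atTop (𝓝 0) := by
    rw [tendsto_zero_iff_norm_tendsto_zero]
    exact (hz0.comp habs_top).congr (fun x => (hnormF x).symm)
  have hbot : Tendsto F atBot (𝓝 0) := by
    rw [tendsto_zero_iff_norm_tendsto_zero]
    exact (hz0.comp habs_bot).congr (fun x => (hnormF x).symm)
  have h0 : ∫ x : ℝ, F' x = 0 := by
    rw [integral_of_hasDerivAt_of_tendsto hderiv hF'int hbot htop]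
    simp
  rw [hF'] at h0
  rw [integral_add (hint1.const_mul _) (hint2.const_mul _), integral_const_mul,
    integral_const_mul] at h0
  have hne : ((ℓ : ℂ) - (m : ℂ) - 1) ≠ 0 := by
    have : ((ℓ - m - 1 : ℤ) : ℂ) ≠ 0 := Int.cast_ne_zero.2 (by omega)
    push_cast at this
    convert this using 1
  have hpc : (p : ℂ) = -((ℓ : ℂ) - (m : ℂ) - 1) := by
    rw [hp]; push_cast; ring
  rw [hpe]
  rw [hpc] at h0
  have hI2 : (∫ x : ℝ, g2 x) = ∫ x : ℝ, ((x : ℂ) + z) ^ p * ((x : ℂ) + (starRingEnd ℂ) z) ^ (m - 1) := rfl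
  rw [show (∫ x : ℝ, ((x : ℂ) + z) ^ (m - ℓ) * ((x : ℂ) + (starRingEnd ℂ) z) ^ m) = ∫ x : ℝ, g1 x from rfl,
    show (∫ x : ℝ, ((x : ℂ) + z) ^ p * ((x : ℂ) + (starRingEnd ℂ) z) ^ (m - 1)) = ∫ x : ℝ, g2 x from rfl]
  field_simp
  linear_combination (-1 : ℂ) * h0
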